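/- arXiv:2106.11407 — 2 statements merged into one kernel-verified Lean document; each statement's English description precedes it below -/
import Mathlib

section
/- Let λ', μ > 0 and let G : [0,∞) → [0,1) be a strictly increasing, absolutely continuous c.d.f. with G(0) = 0, G(x) < 1 for all x, density g, finite mean ∫₀^∞ (1 − G(x)) dx < ∞, and non-increasing hazard rate h(x) = g(x)/(1 − G(x)). Then the invariant fluid queue length b ↦ q(b) = λ' ∫₀^{G⁻¹(1 − bμ/λ')} (1 − G(x)) dx is a convex function on [0, λ'/μ]. -/
open Set MeasureTheory

/-- For a strictly increasing absolutely continuous patience c.d.f. `G`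
with density `g`, `G(0) = 0`, `G < 1`, finite mean, and non-increasing hazard rate
`g/(1 − G)`, the invariant fluid queue length
`q(b) = λ' ∫₀^{G⁻¹(1 − bμ/λ')} (1 − G(x)) dx` is convex on `[0, λ'/μ]`.
(With the convention `G⁻¹(1) = ∞`, the integral `∫₀^{G⁻¹(t)} (1 − G)` is encoded as
the integral of `1 − G` over the set `{x ≥ 0 : G(x) < t}`.) -/
theorem invariant_fluid_queue_length_convex
    (lam' mu : ℝ) (hlam : 0 < lam') (hmu : 0 < mu)
    (G g : ℝ → ℝ) (hg_meas : Measurable g) (hg_nonneg : ∀ x, 0 ≤ x → 0 ≤ g x)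
    (hg_loc : ∀ x, 0 ≤ x → IntegrableOn g (Icc 0 x))
    (hdens : ∀ x, 0 ≤ x → G x = ∫ u in (0 : ℝ)..x, g u)
    (hG_mono : StrictMonoOn G (Ici (0 : ℝ)))
    (hG0 : G 0 = 0) (hG_lt_one : ∀ x, 0 ≤ x → G x < 1)
    (hmean : IntegrableOn (fun x => 1 - G x) (Ici (0 : ℝ)))
    (hhaz_antitone : ∀ x y, 0 ≤ x → x ≤ y → g y / (1 - G y) ≤ g x / (1 - G x))
    (q : ℝ → ℝ)
    (hq : ∀ b, q b = lam' * ∫ x in {x : ℝ | 0 ≤ x ∧ G x < 1 - b * mu / lam'}, (1 - G x)) :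
    ConvexOn ℝ (Icc (0 : ℝ) (lam' / mu)) q := by
  classical
  set F : ℝ → ℝ := fun t => ∫ x in {x : ℝ | 0 ≤ x ∧ G x < t}, (1 - G x) with hF
  have hG_monoOn : MonotoneOn G (Ici (0 : ℝ)) := hG_mono.monotoneOn
  have h1G_pos : ∀ x, 0 ≤ x → 0 < 1 - G x := fun x hx => by
    linarith [hG_lt_one x hx]
  -- interval integrability
  have hg_ii : ∀ a b : ℝ, 0 ≤ a → a ≤ b → IntervalIntegrable g volume a b := by
    intro a b ha hab
    refine IntegrableOn.intervalIntegrable ?_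
    rw [uIcc_of_le hab]
    exact (hg_loc b (ha.trans hab)).mono_set (Icc_subset_Icc ha le_rfl)
  -- g is positive on [0, ∞)
  have hg_pos : ∀ x, 0 ≤ x → 0 < g x := by
    intro x hx
    rcases lt_or_eq_of_le (hg_nonneg x hx) with h | h
    · exact h
    have hgx : g x = 0 := h.symm
    have hzero : ∀ y, x ≤ y → g y = 0 := by
      intro y hy
      have h1 := hhaz_antitone x y hx hy
      rw [hgx] at h1
      simp only [zero_div] at h1
      have h2 : 0 < 1 - G y := h1G_pos y (hx.trans hy)
      have h3 : 0 ≤ g y := hg_nonneg y (hx.trans hy)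
      have h4 : g y / (1 - G y) ≥ 0 := div_nonneg h3 h2.le
      have h5 : g y / (1 - G y) = 0 := le_antisymm h1 h4
      have := (div_eq_zero_iff.mp h5)
      rcases this with h | h
      · exact h
      · exact absurd h (by linarith)
    have hlt : G x < G (x + 1) := hG_mono hx (by positivity : (0:ℝ) ≤ x + 1) (by linarith)
    have heq : G (x + 1) = G x := by
      rw [hdens x hx, hdens (x+1) (by linarith)]
      rw [← intervalIntegral.integral_add_adjacent_intervals (hg_ii 0 x le_rfl hx)
        (hg_ii x (x+1) hx (by linarith))]
      have : (∫ u in x..(x+1), g u) = 0 := by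
        rw [intervalIntegral.integral_of_le (by linarith)]
        refine setIntegral_eq_zero_of_forall_eq_zero ?_
        intro y hy
        exact hzero y hy.1.le
      rw [this, add_zero]
    exact absurd heq (ne_of_gt hlt)
  -- surjectivity onto [0, 1)
  have hsurj : ∀ t, 0 ≤ t → t < 1 → ∃ s, 0 ≤ s ∧ G s = t := by
    intro t ht ht1
    have hx0 : ∃ x₀, 0 ≤ x₀ ∧ t ≤ G x₀ := by
      by_contra hcon
      push_neg at hcon
      have hsub : Ici (0:ℝ) ⊆ {x | 1 - t ≤ 1 - G x} := by
        intro x hx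
        have := hcon x hx
        simp only [mem_setOf_eq]
        linarith
      have hfin := (hmean.measure_ge_lt_top (by linarith : (0:ℝ) < 1 - t))
      have : (volume.restrict (Ici (0:ℝ))) {x | 1 - t ≤ 1 - G x} = ⊤ := by
        rw [Measure.restrict_apply' measurableSet_Ici]
        have : {x | 1 - t ≤ 1 - G x} ∩ Ici 0 = Ici (0:ℝ) :=
          inter_eq_self_of_subset_right hsub
        rw [this, Real.volume_Ici]
      rw [this] at hfin
      exact absurd hfin (by simp)
    obtain ⟨x₀, hx₀, htle⟩ := hx0
    have hcont : ContinuousOn G (Icc 0 x₀) := by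
      have hc : ContinuousOn (fun x => ∫ u in (0:ℝ)..x, g u) (uIcc 0 x₀) :=
        intervalIntegral.continuousOn_primitive_interval
          (by rw [uIcc_of_le hx₀]; exact hg_loc x₀ hx₀)
      rw [uIcc_of_le hx₀] at hc
      exact hc.congr fun x hx => hdens x hx.1
    have hivt := intermediate_value_Icc hx₀ hcont
    have : t ∈ Icc (G 0) (G x₀) := ⟨by rw [hG0]; exact ht, htle⟩
    obtain ⟨s, hs, hGs⟩ := hivt this
    exact ⟨s, hs.1, hGs⟩
  -- set identities
  have hset : ∀ s, 0 ≤ s → {x : ℝ | 0 ≤ x ∧ G x < G s} = Ico 0 s := by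
    intro s hs
    ext x
    simp only [mem_setOf_eq, mem_Ico]
    constructor
    · rintro ⟨hx, hlt⟩
      refine ⟨hx, ?_⟩
      by_contra hc
      push_neg at hc
      exact absurd (hG_monoOn hs hx hc) (by linarith)
    · rintro ⟨hx, hlt⟩
      exact ⟨hx, hG_mono hx (hx.trans hlt.le) hlt⟩
  have hset1 : {x : ℝ | 0 ≤ x ∧ G x < 1} = Ici (0:ℝ) := by
    ext x
    simp only [mem_setOf_eq, mem_Ici]
    exact ⟨fun h => h.1, fun h => ⟨h, hG_lt_one x h⟩⟩
  -- integrability of (1 - G) on subsets of Ici 0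
  have hint1G : ∀ s : Set ℝ, s ⊆ Ici (0:ℝ) → IntegrableOn (fun x => 1 - G x) s :=
    fun s hs => hmean.mono_set hs
  -- set integral of g over Ico
  have hg_eval : ∀ s₁ s₂ : ℝ, 0 ≤ s₁ → s₁ ≤ s₂ →
      ∫ x in Ico s₁ s₂, g x = G s₂ - G s₁ := by
    intro s₁ s₂ h1 h12
    rw [integral_Ico_eq_integral_Ioo, ← integral_Ioc_eq_integral_Ioo,
      ← intervalIntegral.integral_of_le h12,
      ← intervalIntegral.integral_interval_sub_left (hg_ii 0 s₂ le_rfl (h1.trans h12))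
        (hg_ii 0 s₁ le_rfl h1),
      ← hdens s₂ (h1.trans h12), ← hdens s₁ h1]
  -- additivity of the queue-integral
  have hsum : ∀ s₁ s₂ : ℝ, 0 ≤ s₁ → s₁ ≤ s₂ →
      (∫ x in Ico 0 s₂, (1 - G x)) =
        (∫ x in Ico 0 s₁, (1 - G x)) + ∫ x in Ico s₁ s₂, (1 - G x) := by
    intro s₁ s₂ h1 h12
    rw [← setIntegral_union (Ico_disjoint_Ico_same) measurableSet_Ico
      (hint1G _ (Ico_subset_Ici_self)) (hint1G _ (fun x hx => h1.trans hx.1)),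
      Ico_union_Ico_eq_Ico h1 h12]
  -- upper bound on slices
  have hupper : ∀ s₁ s₂ : ℝ, 0 ≤ s₁ → s₁ ≤ s₂ →
      ∫ x in Ico s₁ s₂, (1 - G x) ≤ (1 - G s₂) / g s₂ * (G s₂ - G s₁) := by
    intro s₁ s₂ h1 h12
    have h2 : (0:ℝ) ≤ s₂ := h1.trans h12
    have hgs2 : 0 < g s₂ := hg_pos s₂ h2
    have hstep : ∫ x in Ico s₁ s₂, (1 - G x)
        ≤ ∫ x in Ico s₁ s₂, ((1 - G s₂) / g s₂ * g x) := by
      refine setIntegral_mono_on (hint1G _ (fun x hx => h1.trans hx.1))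
        (((hg_loc s₂ h2).mono_set (fun x hx => ⟨h1.trans hx.1, hx.2.le⟩)).const_mul _)
        measurableSet_Ico ?_
      intro x hx
      have hx0 : (0:ℝ) ≤ x := h1.trans hx.1
      have hh := hhaz_antitone x s₂ hx0 hx.2.le
      rw [div_le_div_iff₀ (h1G_pos s₂ h2) (h1G_pos x hx0)] at hh
      rw [div_mul_eq_mul_div, le_div_iff₀ hgs2]
      nlinarith
    calc ∫ x in Ico s₁ s₂, (1 - G x)
        ≤ ∫ x in Ico s₁ s₂, ((1 - G s₂) / g s₂ * g x) := hstep
      _ = (1 - G s₂) / g s₂ * ∫ x in Ico s₁ s₂, g x := by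
          rw [integral_const_mul]
      _ = (1 - G s₂) / g s₂ * (G s₂ - G s₁) := by rw [hg_eval s₁ s₂ h1 h12]
  -- lower bound on slices
  have hlower : ∀ s₂ s₃ : ℝ, 0 ≤ s₂ → s₂ ≤ s₃ →
      (1 - G s₂) / g s₂ * (G s₃ - G s₂) ≤ ∫ x in Ico s₂ s₃, (1 - G x) := by
    intro s₂ s₃ h2 h23
    have hgs2 : 0 < g s₂ := hg_pos s₂ h2
    have hstep : ∫ x in Ico s₂ s₃, ((1 - G s₂) / g s₂ * g x)
        ≤ ∫ x in Ico s₂ s₃, (1 - G x) := by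
      refine setIntegral_mono_on
        (((hg_loc s₃ (h2.trans h23)).mono_set (fun x hx => ⟨h2.trans hx.1, hx.2.le⟩)).const_mul _)
        (hint1G _ (fun x hx => h2.trans hx.1))
        measurableSet_Ico ?_
      intro x hx
      have hx0 : (0:ℝ) ≤ x := h2.trans hx.1
      have hh := hhaz_antitone s₂ x h2 hx.1
      rw [div_le_div_iff₀ (h1G_pos x hx0) (h1G_pos s₂ h2)] at hh
      rw [div_mul_eq_mul_div, div_le_iff₀ hgs2]
      nlinarith
    calc (1 - G s₂) / g s₂ * (G s₃ - G s₂)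
        = ∫ x in Ico s₂ s₃, ((1 - G s₂) / g s₂ * g x) := by
          rw [integral_const_mul, hg_eval s₂ s₃ h2 h23]
      _ ≤ ∫ x in Ico s₂ s₃, (1 - G x) := hstep
  -- F evaluated at values of G
  have hF_eval : ∀ t s : ℝ, 0 ≤ s → G s = t → F t = ∫ x in Ico 0 s, (1 - G x) := by
    intro t s hs hGs
    rw [hF]
    simp only
    rw [← hGs, hset s hs]
  -- F is nonnegative-monotone: F t ≤ F 1 for any G-value t < 1 handled below directly
  -- convexity of F on [0,1]
  have hFconv : ConvexOn ℝ (Icc (0:ℝ) 1) F := by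
    refine convexOn_of_slope_mono_adjacent (convex_Icc 0 1) ?_
    intro t₁ t₂ t₃ h1m h3m h12 h23
    have ht1 : 0 ≤ t₁ := h1m.1
    have ht3 : t₃ ≤ 1 := h3m.2
    have ht2lt1 : t₂ < 1 := lt_of_lt_of_le h23 ht3
    obtain ⟨s₁, hs₁, hGs₁⟩ := hsurj t₁ ht1 (lt_trans h12 ht2lt1)
    obtain ⟨s₂, hs₂, hGs₂⟩ := hsurj t₂ (ht1.trans h12.le) ht2lt1
    have hs12 : s₁ ≤ s₂ := by
      by_contra hc
      push_neg at hc
      exact absurd (hG_mono hs₂ hs₁ hc) (by rw [hGs₁, hGs₂]; linarith)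
    obtain ⟨C, hC⟩ : ∃ C : ℝ, C = (1 - t₂) / g s₂ := ⟨_, rfl⟩
    have hCpos : 0 < C := by
      rw [hC]
      exact div_pos (by linarith) (hg_pos s₂ hs₂)
    -- upper bound on left slope numerator
    have hub : F t₂ - F t₁ ≤ C * (t₂ - t₁) := by
      rw [hF_eval t₁ s₁ hs₁ hGs₁, hF_eval t₂ s₂ hs₂ hGs₂, hsum s₁ s₂ hs₁ hs12]
      have h := hupper s₁ s₂ hs₁ hs12
      rw [hGs₁, hGs₂, ← hC] at h
      linarith
    -- lower bound on right slope numerator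
    have hlb : C * (t₃ - t₂) ≤ F t₃ - F t₂ := by
      have claim : ∀ t, t₂ ≤ t → t < t₃ → C * (t - t₂) ≤ F t₃ - F t₂ := by
        intro t htl htr
        have ht01 : t < 1 := lt_of_lt_of_le htr ht3
        obtain ⟨s, hs, hGs⟩ := hsurj t ((ht1.trans h12.le).trans htl) ht01
        have hs2s : s₂ ≤ s := by
          by_contra hc
          push_neg at hc
          exact absurd (hG_mono hs hs₂ hc) (by rw [hGs, hGs₂]; linarith)
        have hFt : F t - F t₂ = ∫ x in Ico s₂ s, (1 - G x) := by
          rw [hF_eval t s hs hGs, hF_eval t₂ s₂ hs₂ hGs₂, hsum s₂ s hs₂ hs2s]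
          ring
        have hlow := hlower s₂ s hs₂ hs2s
        rw [hGs, hGs₂, ← hC] at hlow
        have hFmono : F t ≤ F t₃ := by
          rcases eq_or_lt_of_le ht3 with h1 | h1
          · -- t₃ = 1
            have hF1 : F t₃ = ∫ x in Ici (0:ℝ), (1 - G x) := by
              rw [h1, hF]
              simp only
              rw [hset1]
            rw [hF_eval t s hs hGs, hF1]
            refine setIntegral_mono_set hmean ?_ ?_
            · filter_upwards [ae_restrict_mem measurableSet_Ici] with x hx
              exact (h1G_pos x hx).le
            · exact HasSubset.Subset.eventuallyLE Ico_subset_Ici_self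
          · obtain ⟨s₃, hs₃, hGs₃⟩ := hsurj t₃ (ht1.trans (h12.trans h23).le) h1
            have hss3 : s ≤ s₃ := by
              by_contra hc
              push_neg at hc
              exact absurd (hG_mono hs₃ hs hc) (by rw [hGs, hGs₃]; linarith)
            rw [hF_eval t s hs hGs, hF_eval t₃ s₃ hs₃ hGs₃, hsum s s₃ hs hss3]
            have : 0 ≤ ∫ x in Ico s s₃, (1 - G x) := by
              refine setIntegral_nonneg measurableSet_Ico ?_
              intro x hx
              exact (h1G_pos x (hs.trans hx.1)).le
            linarith
        linarith
      refine le_of_forall_pos_le_add ?_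
      intro ε hε
      rcases le_or_gt (t₃ - ε / C) t₂ with hcase | hcase
      · have h0 := claim t₂ le_rfl h23
        have : C * (t₃ - t₂) ≤ ε := by
          have : t₃ - t₂ ≤ ε / C := by linarith
          calc C * (t₃ - t₂) ≤ C * (ε / C) :=
                mul_le_mul_of_nonneg_left this hCpos.le
            _ = ε := by field_simp
        simp only [mul_zero, sub_self] at h0
        linarith
      · have htl : t₂ ≤ t₃ - ε / C := hcase.le
        have hεC : 0 < ε / C := div_pos hε hCpos
        have htr : t₃ - ε / C < t₃ := by linarith
        have h0 := claim (t₃ - ε / C) htl htr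
        have hkey : C * (t₃ - t₂) = C * (t₃ - ε / C - t₂) + ε := by
          field_simp
          ring
        linarith
    rw [div_le_div_iff₀ (by linarith) (by linarith)]
    nlinarith [mul_le_mul_of_nonneg_right hub (by linarith : (0:ℝ) ≤ t₃ - t₂),
      mul_le_mul_of_nonneg_right hlb (by linarith : (0:ℝ) ≤ t₂ - t₁)]
  -- transfer convexity to q
  have hmap : ∀ c : ℝ, c ∈ Icc (0:ℝ) (lam' / mu) → (1 - c * mu / lam') ∈ Icc (0:ℝ) 1 := by
    intro c hc
    constructor
    · have : c * mu ≤ lam' := by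
        have := hc.2
        calc c * mu ≤ (lam' / mu) * mu := mul_le_mul_of_nonneg_right this hmu.le
          _ = lam' := by field_simp
      have : c * mu / lam' ≤ 1 := by
        rw [div_le_one hlam]; exact this
      linarith
    · have : 0 ≤ c * mu / lam' := div_nonneg (mul_nonneg hc.1 hmu.le) hlam.le
      linarith
  refine ⟨convex_Icc _ _, ?_⟩
  intro a ha b hb θ σ hθ hσ hθσ
  rw [hq, hq, hq]
  have key := hFconv.2 (hmap a ha) (hmap b hb) hθ hσ hθσ
  simp only [smul_eq_mul] at key
  have harg : (1 : ℝ) - (θ * a + σ * b) * mu / lam'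
      = θ * (1 - a * mu / lam') + σ * (1 - b * mu / lam') := by
    field_simp
    nlinarith [hθσ]
  have hqeq : ∀ c : ℝ, (∫ x in {x : ℝ | 0 ≤ x ∧ G x < 1 - c * mu / lam'}, (1 - G x))
      = F (1 - c * mu / lam') := fun c => rfl
  rw [hqeq, hqeq, hqeq]
  simp only [smul_eq_mul]
  rw [harg]
  nlinarith [key, hlam.le]
end

section
/- Let λ, μ, a, c ∈ (0,∞), let g_U : [0,1] → [0,∞) be continuous and convex, and let G be a patience-time c.d.f. on [0,∞) that is strictly increasing, absolutely continuous with density g, with G(0) = 0, G(x) < 1 for all x, finite mean, and non-increasing hazard rate h = g/(1 − G). Then the holding-cost fluid control objective F(b) = c·q(b,1) + a(λ − bμ) + g_U(b), where q(b,1) = λ ∫₀^{G⁻¹(1 − bμ/λ)} (1 − G(x)) dx, is convex and continuous on [0, min{1, λ/μ}] and attains its minimum there; i.e., there exists b_{*,hc} ∈ [0, min{1, λ/μ}] with F(b_{*,hc}) ≤ F(b) for all b in the interval. -/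
open Set MeasureTheory

set_option maxHeartbeats 1000000

/-- With `g_U` continuous and convex on `[0,1]` and a strictly
increasing, absolutely continuous patience c.d.f. `G` with density `g`, `G(0) = 0`,
`G < 1`, finite mean, and non-increasing hazard rate, the holding-cost fluid control
objective `F(b) = c·q(b,1) + a(λ − bμ) + g_U(b)`, where
`q(b,1) = λ ∫₀^{G⁻¹(1 − bμ/λ)} (1 − G(x)) dx` (encoded with the convention
`G⁻¹(1) = ∞` as an integral over `{x ≥ 0 : G(x) < 1 − bμ/λ}`), is convex and
continuous on `[0, min {1, λ/μ}]` and attains its minimum there. -/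
theorem holding_cost_fluid_control_attains_min
    (lam mu a c : ℝ) (hlam : 0 < lam) (hmu : 0 < mu) (ha : 0 < a) (hc : 0 < c)
    (gU : ℝ → ℝ) (hg_nonneg : ∀ b ∈ Icc (0 : ℝ) 1, 0 ≤ gU b)
    (hg_cont : ContinuousOn gU (Icc (0 : ℝ) 1))
    (hg_conv : ConvexOn ℝ (Icc (0 : ℝ) 1) gU)
    (G g : ℝ → ℝ) (hg_meas : Measurable g) (hg0 : ∀ x, 0 ≤ x → 0 ≤ g x)
    (hg_loc : ∀ x, 0 ≤ x → IntegrableOn g (Icc 0 x))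
    (hdens : ∀ x, 0 ≤ x → G x = ∫ u in (0 : ℝ)..x, g u)
    (hG_mono : StrictMonoOn G (Ici (0 : ℝ)))
    (hG0 : G 0 = 0) (hG_lt_one : ∀ x, 0 ≤ x → G x < 1)
    (hmean : IntegrableOn (fun x => 1 - G x) (Ici (0 : ℝ)))
    (hhaz_antitone : ∀ x y, 0 ≤ x → x ≤ y → g y / (1 - G y) ≤ g x / (1 - G x))
    (q1 : ℝ → ℝ)
    (hq1 : ∀ b, q1 b = lam * ∫ x in {x : ℝ | 0 ≤ x ∧ G x < 1 - b * mu / lam}, (1 - G x))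
    (F : ℝ → ℝ) (hF : ∀ b, F b = c * q1 b + a * (lam - b * mu) + gU b) :
    ConvexOn ℝ (Icc (0 : ℝ) (min 1 (lam / mu))) F ∧
    ContinuousOn F (Icc (0 : ℝ) (min 1 (lam / mu))) ∧
    ∃ bstar ∈ Icc (0 : ℝ) (min 1 (lam / mu)),
      ∀ b ∈ Icc (0 : ℝ) (min 1 (lam / mu)), F bstar ≤ F b := by
  have hGmonoOn : MonotoneOn G (Ici (0:ℝ)) := hG_mono.monotoneOn
  set S : ℝ → Set ℝ := fun t => {x : ℝ | 0 ≤ x ∧ G x < t} with hSdef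
  set Q : ℝ → ℝ := fun t => ∫ x in S t, (1 - G x) with hQdef
  -- measurability of the sublevel sets
  have hSmeas : ∀ t, MeasurableSet (S t) := by
    intro t
    have hoc : OrdConnected (S t) := by
      constructor
      intro p hp r hr y hy
      exact ⟨hp.1.trans hy.1, lt_of_le_of_lt
        (hGmonoOn (hp.1.trans hy.1) hr.1 hy.2) hr.2⟩
    exact hoc.measurableSet
  have hSsub : ∀ t, S t ⊆ Ici (0:ℝ) := fun t x hx => hx.1
  have hSmono : ∀ u v : ℝ, u ≤ v → S u ⊆ S v := fun u v huv x hx => ⟨hx.1, hx.2.trans_le huv⟩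
  have hInt1 : ∀ s : Set ℝ, s ⊆ Ici (0:ℝ) → IntegrableOn (fun x => 1 - G x) s :=
    fun s hs => hmean.mono_set hs
  -- integrability of g on [0, ∞)
  have hii : ∀ p q : ℝ, 0 ≤ p → p ≤ q → IntervalIntegrable g volume p q := by
    intro p q hp hpq
    have h1 : IntegrableOn g (Icc p q) := (hg_loc q (hp.trans hpq)).mono_set
      (Icc_subset_Icc hp le_rfl)
    have h2 : IntegrableOn g (uIcc p q) := by rwa [uIcc_of_le hpq]
    exact h2.intervalIntegrable
  have hgIoi : IntegrableOn g (Ioi (0:ℝ)) := by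
    refine integrableOn_Ioi_of_intervalIntegral_norm_bounded (f := g) (b := fun n : ℕ => (n:ℝ))
      1 0 (fun i => (hg_loc i (Nat.cast_nonneg i)).mono_set Ioc_subset_Icc_self)
      tendsto_natCast_atTop_atTop ?_
    filter_upwards with n
    have hcast : (0:ℝ) ≤ (n:ℝ) := Nat.cast_nonneg n
    have heq : (∫ x in (0:ℝ)..(n:ℝ), ‖g x‖) = ∫ x in (0:ℝ)..(n:ℝ), g x := by
      apply intervalIntegral.integral_congr
      intro x hx
      rw [uIcc_of_le hcast] at hx
      exact Real.norm_of_nonneg (hg0 x hx.1)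
    rw [heq, ← hdens n hcast]
    exact (hG_lt_one n hcast).le
  have hgint : IntegrableOn g (Ici (0:ℝ)) := (integrableOn_Ici_iff_integrableOn_Ioi (f := g)).2 hgIoi
  -- G tends to 1, total mass of g equals 1
  have hsup : ∀ s : ℝ, s < 1 → ∃ X, 0 ≤ X ∧ s < G X := by
    intro s hs
    by_contra hcon
    push_neg at hcon
    have hε : 0 < 1 - s := by linarith
    have hfin := hmean.measure_ge_lt_top hε
    have htop : (volume.restrict (Ici (0:ℝ))) {x : ℝ | 1 - s ≤ 1 - G x} = ⊤ := by
      rw [Measure.restrict_apply' measurableSet_Ici]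
      have hset : {x : ℝ | 1 - s ≤ 1 - G x} ∩ Ici 0 = Ici 0 := by
        apply inter_eq_self_of_subset_right
        intro x hx
        have := hcon x hx
        simp only [mem_setOf_eq]
        linarith
      rw [hset, Real.volume_Ici]
    rw [htop] at hfin
    exact lt_irrefl _ hfin
  have hGlim : Filter.Tendsto (fun n : ℕ => G (n:ℝ)) Filter.atTop (nhds (1:ℝ)) := by
    rw [tendsto_order]
    constructor
    · intro s hs
      obtain ⟨X, hX0, hXs⟩ := hsup s hs
      obtain ⟨N, hN⟩ := exists_nat_ge X
      filter_upwards [Filter.eventually_ge_atTop N] with n hn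
      have hXn : X ≤ (n:ℝ) := hN.trans (Nat.cast_le.2 hn)
      exact hXs.trans_le (hGmonoOn hX0 (hX0.trans hXn) hXn)
    · intro s hs
      filter_upwards with n
      exact (hG_lt_one n (Nat.cast_nonneg n)).trans hs
  have hgtot : ∫ x in Ici (0:ℝ), g x = 1 := by
    have heq : (fun n : ℕ => ∫ x in (0:ℝ)..(n:ℝ), g x) = fun n : ℕ => G (n:ℝ) := by
      funext n; exact (hdens n (Nat.cast_nonneg n)).symm
    have ht := intervalIntegral_tendsto_integral_Ioi (μ := volume) 0 hgIoi
      (tendsto_natCast_atTop_atTop (R := ℝ))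
    rw [heq] at ht
    rw [MeasureTheory.integral_Ici_eq_integral_Ioi]
    exact tendsto_nhds_unique ht hGlim
  -- continuity of G on compact intervals, and surjectivity onto [0,1)
  have hGcont : ∀ b : ℝ, 0 ≤ b → ContinuousOn G (Icc 0 b) := by
    intro b hb
    have hcp := intervalIntegral.continuousOn_primitive (μ := volume) (a := 0) (b := b)
      (hg_loc b hb)
    apply hcp.congr
    intro x hx
    rw [hdens x hx.1, intervalIntegral.integral_of_le hx.1]
  have hmex : ∀ s : ℝ, 0 ≤ s → s < 1 → ∃ m, 0 ≤ m ∧ G m = s := by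
    intro s h0s hs1
    obtain ⟨X, hX0, hXs⟩ := hsup s hs1
    have hmem : s ∈ Icc (G 0) (G X) := ⟨by rw [hG0]; exact h0s, hXs.le⟩
    obtain ⟨m, hmmem, hGm⟩ := intermediate_value_Icc hX0 (hGcont X hX0) hmem
    exact ⟨m, hmmem.1, hGm⟩
  -- identification of sublevel sets as intervals
  have hSIco : ∀ s m0 : ℝ, 0 ≤ m0 → G m0 = s → S s = Ico 0 m0 := by
    intro s m0 hm0 hGm
    ext x
    simp only [hSdef, mem_setOf_eq, mem_Ico]
    constructor
    · rintro ⟨hx0, hxs⟩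
      refine ⟨hx0, ?_⟩
      by_contra hxm
      push_neg at hxm
      have := hGmonoOn hm0 hx0 hxm
      rw [hGm] at this
      linarith
    · rintro ⟨hx0, hxm⟩
      exact ⟨hx0, hGm ▸ hG_mono hx0 hm0 hxm⟩
  have hS1 : S 1 = Ici (0:ℝ) := by
    ext x
    simp only [hSdef, mem_setOf_eq, mem_Ici]
    exact ⟨fun h => h.1, fun h => ⟨h, hG_lt_one x h⟩⟩
  -- integral of g over Ico intervals
  have hIcog : ∀ p q : ℝ, 0 ≤ p → p ≤ q → ∫ x in Ico p q, g x = G q - G p := by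
    intro p q hp hpq
    rw [setIntegral_congr_set Ico_ae_eq_Ioc, ← intervalIntegral.integral_of_le hpq]
    have hadd := intervalIntegral.integral_add_adjacent_intervals
      (hii 0 p le_rfl hp) (hii p q hp hpq)
    rw [hdens q (hp.trans hpq), hdens p hp, ← hadd]
    ring
  -- the layer integral of g
  have hlayerg : ∀ u v : ℝ, 0 ≤ u → u ≤ v → v ≤ 1 →
      ∫ x in (S v \ S u), g x = v - u := by
    intro u v hu huv hv1
    rcases eq_or_lt_of_le hv1 with hv1' | hv1'
    · -- v = 1
      rcases eq_or_lt_of_le huv with huv' | huv'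
      · rw [← huv', diff_self, MeasureTheory.setIntegral_empty]; ring
      · subst hv1'
        obtain ⟨m0, hm0, hGm0⟩ := hmex u hu huv'
        have hdiff : S 1 \ S u = Ici m0 := by
          rw [hS1, hSIco u m0 hm0 hGm0]
          ext x
          simp only [mem_diff, mem_Ici, mem_Ico]
          constructor
          · rintro ⟨hx0, hx⟩
            by_contra hxm
            push_neg at hxm
            exact hx ⟨hx0, hxm⟩
          · intro hx
            exact ⟨hm0.trans hx, fun hc => absurd hc.2 (not_lt.2 hx)⟩
        rw [hdiff]
        have hdisj : Disjoint (Ico (0:ℝ) m0) (Ici m0) := by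
          rw [Set.disjoint_left]
          intro x hx hx'
          exact absurd (mem_Ici.1 hx') (not_le.2 hx.2)
        have hsplit := MeasureTheory.setIntegral_union (f := g) (μ := volume) hdisj
          measurableSet_Ici (hgint.mono_set (fun x hx => hx.1))
          (hgint.mono_set (fun x hx => hm0.trans hx))
        rw [Ico_union_Ici_eq_Ici hm0, hgtot, hIcog 0 m0 le_rfl hm0, hG0, hGm0] at hsplit
        linarith
    · -- v < 1
      obtain ⟨m0, hm0, hGm0⟩ := hmex u hu (lt_of_le_of_lt huv hv1')
      obtain ⟨m1, hm1, hGm1⟩ := hmex v (hu.trans huv) hv1'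
      have hm01 : m0 ≤ m1 := by
        by_contra hcon
        push_neg at hcon
        have := hG_mono hm1 hm0 hcon
        rw [hGm0, hGm1] at this
        linarith
      have hdiff : S v \ S u = Ico m0 m1 := by
        rw [hSIco u m0 hm0 hGm0, hSIco v m1 hm1 hGm1]
        ext x
        simp only [mem_diff, mem_Ico]
        constructor
        · rintro ⟨⟨hx0, hx1⟩, hx⟩
          refine ⟨?_, hx1⟩
          by_contra hxm
          push_neg at hxm
          exact hx ⟨hx0, hxm⟩
        · rintro ⟨hxm0, hxm1⟩
          exact ⟨⟨hm0.trans hxm0, hxm1⟩, fun hc => absurd hc.2 (not_lt.2 hxm0)⟩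
      rw [hdiff, hIcog m0 m1 hm0 hm01, hGm0, hGm1]
  -- difference of Q values
  have hQdiff : ∀ u v : ℝ, u ≤ v → Q v - Q u = ∫ x in (S v \ S u), (1 - G x) := by
    intro u v huv
    exact (MeasureTheory.integral_diff (hSmeas u) (hInt1 (S v) (hSsub v))
      (hSmono u v huv)).symm
  -- key slope inequality
  have hkey : ∀ x y z : ℝ, 0 ≤ x → x < y → y < z → z ≤ 1 →
      (∫ p in (S y \ S x), (1 - G p)) * (z - y) ≤ (∫ p in (S z \ S y), (1 - G p)) * (y - x) := by
    intro x y z hx hxy hyz hz1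
    set A1 := S y \ S x with hA1
    set A2 := S z \ S y with hA2
    have hA1sub : A1 ⊆ Ici (0:ℝ) := fun p hp => hp.1.1
    have hA2sub : A2 ⊆ Ici (0:ℝ) := fun p hp => hp.1.1
    have hA1m : MeasurableSet A1 := (hSmeas y).diff (hSmeas x)
    have hA2m : MeasurableSet A2 := (hSmeas z).diff (hSmeas y)
    have hmemA1 : ∀ p ∈ A1, 0 ≤ p ∧ x ≤ G p ∧ G p < y := by
      rintro p ⟨⟨hp0, hpy⟩, hpx⟩
      refine ⟨hp0, ?_, hpy⟩
      by_contra hcon; push_neg at hcon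
      exact hpx ⟨hp0, hcon⟩
    have hmemA2 : ∀ p ∈ A2, 0 ≤ p ∧ y ≤ G p ∧ G p < z := by
      rintro p ⟨⟨hp0, hpz⟩, hpy⟩
      refine ⟨hp0, ?_, hpz⟩
      by_contra hcon; push_neg at hcon
      exact hpy ⟨hp0, hcon⟩
    set I1 := ∫ p in A1, (1 - G p) with hI1
    set J1 := ∫ p in A1, g p with hJ1
    have hptwise : ∀ q ∈ A2, g q * I1 ≤ (1 - G q) * J1 := by
      intro q hq
      obtain ⟨hq0, hqy, hqz⟩ := hmemA2 q hq
      have hstep : ∫ p in A1, g q * (1 - G p) ≤ ∫ p in A1, (1 - G q) * g p := by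
        refine MeasureTheory.setIntegral_mono_on
          ((hInt1 A1 hA1sub).const_mul _) ((hgint.mono_set hA1sub).const_mul _) hA1m ?_
        intro p hp
        obtain ⟨hp0, hpx, hpy⟩ := hmemA1 p hp
        have hpq : p ≤ q := by
          by_contra hcon; push_neg at hcon
          have := hG_mono hq0 hp0 hcon
          linarith
        have h1p : 0 < 1 - G p := by have := hG_lt_one p hp0; linarith
        have h1q : 0 < 1 - G q := by have := hG_lt_one q hq0; linarith
        have hhz := hhaz_antitone p q hp0 hpq
        rw [div_le_div_iff₀ h1q h1p] at hhz
        calc g q * (1 - G p) ≤ g p * (1 - G q) := hhz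
        _ = (1 - G q) * g p := by ring
      rw [MeasureTheory.integral_const_mul, MeasureTheory.integral_const_mul] at hstep
      exact hstep
    have hstep2 : ∫ q in A2, g q * I1 ≤ ∫ q in A2, (1 - G q) * J1 :=
      MeasureTheory.setIntegral_mono_on ((hgint.mono_set hA2sub).mul_const _)
        ((hInt1 A2 hA2sub).mul_const _) hA2m hptwise
    rw [MeasureTheory.integral_mul_const, MeasureTheory.integral_mul_const] at hstep2
    have hJ1v : J1 = y - x := hlayerg x y hx hxy.le (hyz.le.trans hz1)
    have hJ2v : (∫ q in A2, g q) = z - y := hlayerg y z (hx.trans hxy.le) hyz.le hz1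
    rw [hJ1v, hJ2v] at hstep2
    calc I1 * (z - y) = (z - y) * I1 := by ring
    _ ≤ (∫ p in A2, (1 - G p)) * (y - x) := hstep2
  -- convexity of Q on [0,1]
  have hQconv : ConvexOn ℝ (Icc (0:ℝ) 1) Q := by
    refine convexOn_of_slope_mono_adjacent (convex_Icc 0 1) ?_
    intro x y z hx hz hxy hyz
    have hQyx : Q y - Q x = ∫ p in (S y \ S x), (1 - G p) := hQdiff x y hxy.le
    have hQzy : Q z - Q y = ∫ p in (S z \ S y), (1 - G p) := hQdiff y z hyz.le
    rw [div_le_div_iff₀ (by linarith) (by linarith), hQyx, hQzy]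
    exact hkey x y z hx.1 hxy hyz hz.2
  -- continuity of Q
  have hGm_mono : Monotone (fun x : ℝ => G (max x 0)) := fun p q hpq =>
    hGmonoOn (le_max_right p 0) (le_max_right q 0) (max_le_max hpq le_rfl)
  set f0 : ℝ → ℝ := fun x => 1 - G (max x 0) with hf0
  have hf0_meas : Measurable f0 := measurable_const.sub hGm_mono.measurable
  have hQind : ∀ t, Q t = ∫ x, (S t).indicator f0 x := by
    intro t
    rw [MeasureTheory.integral_indicator (hSmeas t)]
    apply MeasureTheory.setIntegral_congr_fun (hSmeas t)
    intro p hp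
    simp only [hf0]
    rw [max_eq_left hp.1]
  have hQcont : Continuous Q := by
    have hrw : Q = fun t => ∫ x, (S t).indicator f0 x := funext hQind
    rw [hrw, continuous_iff_continuousAt]
    intro t₀
    have hbound : Integrable ((Ici (0:ℝ)).indicator f0) := by
      rw [integrable_indicator_iff measurableSet_Ici]
      apply hmean.congr_fun ?_ measurableSet_Ici
      intro p hp
      simp only [hf0]
      rw [max_eq_left hp]
    apply MeasureTheory.continuousAt_of_dominated (bound := (Ici (0:ℝ)).indicator f0)
    · filter_upwards with t
      exact (hf0_meas.indicator (hSmeas t)).aestronglyMeasurable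
    · filter_upwards with t
      filter_upwards with p
      by_cases hp : p ∈ S t
      · have hnn : 0 ≤ f0 p := by
          simp only [hf0]
          rw [max_eq_left hp.1]
          have := hG_lt_one p hp.1; linarith
        rw [Set.indicator_of_mem hp, Set.indicator_of_mem (mem_Ici.2 hp.1),
          Real.norm_of_nonneg hnn]
      · rw [Set.indicator_of_notMem hp, norm_zero]
        apply Set.indicator_nonneg
        intro q hq
        simp only [hf0]
        rw [max_eq_left hq]
        have := hG_lt_one q hq; linarith
    · exact hbound
    · have hN : volume {p : ℝ | 0 ≤ p ∧ G p = t₀} = 0 := by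
        apply Set.Subsingleton.measure_zero
        intro p hp q hq
        exact hG_mono.injOn hp.1 hq.1 (hp.2.trans hq.2.symm)
      filter_upwards [measure_eq_zero_iff_ae_notMem.1 hN] with p hp
      by_cases h0p : 0 ≤ p
      · have hne : G p ≠ t₀ := fun h => hp ⟨h0p, h⟩
        rcases lt_or_gt_of_ne hne with hlt | hgt
        · have hev : (fun t => (S t).indicator f0 p) =ᶠ[nhds t₀] fun _ => f0 p := by
            filter_upwards [Ioi_mem_nhds hlt] with t ht
            exact Set.indicator_of_mem (show p ∈ S t from ⟨h0p, ht⟩) f0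
          exact ContinuousAt.congr continuousAt_const hev.symm
        · have hev : (fun t => (S t).indicator f0 p) =ᶠ[nhds t₀] fun _ => 0 := by
            filter_upwards [Iio_mem_nhds hgt] with t ht
            apply Set.indicator_of_notMem
            intro hc
            exact absurd hc.2 (not_lt.2 ht.le)
          exact ContinuousAt.congr continuousAt_const hev.symm
      · have hev : (fun t => (S t).indicator f0 p) = fun _ => 0 := by
          funext t
          exact Set.indicator_of_notMem (fun hc => h0p hc.1) f0
        rw [hev]
        exact continuousAt_const
  -- assembling
  set D := Icc (0:ℝ) (min 1 (lam / mu)) with hD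
  have hD1 : D ⊆ Icc (0:ℝ) 1 := Icc_subset_Icc le_rfl (min_le_left _ _)
  have hmap : ∀ b ∈ D, (1 - b * mu / lam) ∈ Icc (0:ℝ) 1 := by
    intro b hb
    obtain ⟨hb0, hb1⟩ := hb
    have hble : b ≤ lam / mu := le_trans hb1 (min_le_right _ _)
    have hbm : b * mu ≤ lam := (le_div_iff₀ hmu).1 hble
    have h1 : b * mu / lam ≤ 1 := (div_le_one hlam).2 hbm
    have h2 : 0 ≤ b * mu / lam := div_nonneg (mul_nonneg hb0 hmu.le) hlam.le
    exact mem_Icc.mpr ⟨by linarith, by linarith⟩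
  have hq1Q : ∀ b, q1 b = lam * Q (1 - b * mu / lam) := by
    intro b; rw [hq1]
  have hFeq : ∀ b, F b = c * (lam * Q (1 - b * mu / lam)) + a * (lam - b * mu) + gU b := by
    intro b; rw [hF, hq1Q]
  have haffc : Continuous fun b : ℝ => 1 - b * mu / lam := by
    continuity
  have hFcont : ContinuousOn F D := by
    have h1 : Continuous fun b : ℝ =>
        c * (lam * Q (1 - b * mu / lam)) + a * (lam - b * mu) :=
      (continuous_const.mul (continuous_const.mul (hQcont.comp haffc))).add
        (continuous_const.mul (continuous_const.sub (continuous_id.mul continuous_const)))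
    have h2 := h1.continuousOn.add (hg_cont.mono hD1)
    exact h2.congr (fun b _ => hFeq b)
  have hsmap : ∀ p q α β : ℝ, α + β = 1 → 1 - (α * p + β * q) * mu / lam
      = α * (1 - p * mu / lam) + β * (1 - q * mu / lam) := by
    intro p q α β hab
    have hb : β = 1 - α := by linarith
    subst hb
    have hl : lam ≠ 0 := ne_of_gt hlam
    field_simp
    ring
  have hconvF : ConvexOn ℝ D F := by
    have hcQ : ConvexOn ℝ D fun b => c * (lam * Q (1 - b * mu / lam)) := by
      refine ⟨convex_Icc _ _, ?_⟩
      intro p hp q hq α β hα hβ hαβ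
      simp only [smul_eq_mul]
      have hkey2 := hQconv.2 (hmap p hp) (hmap q hq) hα hβ hαβ
      simp only [smul_eq_mul] at hkey2
      rw [hsmap p q α β hαβ]
      have hcl : (0:ℝ) ≤ c * lam := by positivity
      nlinarith [mul_le_mul_of_nonneg_left hkey2 hcl]
    have haff : ConvexOn ℝ D fun b => a * (lam - b * mu) := by
      refine ⟨convex_Icc _ _, ?_⟩
      intro p hp q hq α β hα hβ hαβ
      simp only [smul_eq_mul]
      have hb : β = 1 - α := by linarith
      subst hb
      apply le_of_eq; ring
    have hgC : ConvexOn ℝ D gU := hg_conv.subset hD1 (convex_Icc _ _)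
    have hsum := (hcQ.add haff).add hgC
    have hFeq2 : F = (((fun b => c * (lam * Q (1 - b * mu / lam))) +
        fun b => a * (lam - b * mu)) + gU) := by
      funext b
      simp only [Pi.add_apply]
      exact hFeq b
    rw [hFeq2]
    exact hsum
  have h0D : (0:ℝ) ∈ D := ⟨le_rfl, le_min zero_le_one (div_pos hlam hmu).le⟩
  obtain ⟨bs, hbs, hmin⟩ := isCompact_Icc.exists_isMinOn ⟨0, h0D⟩ hFcont
  exact ⟨hconvF, hFcont, bs, hbs, fun b hb => hmin hb⟩
end
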